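/- Define g(x) = 1/6 − 2(x − ⌊x + 1/2⌋)². Then g is continuous, periodic of period 1, and has mean value zero (∫₀¹ g(x)dx = 0). Moreover, with N(s) = k² for k² − k ≤ s < k² + k and A(t) = (1/t)∫₀ᵗ (N(s) − s)ds − 1/3, there is a constant C such that |A(t) − g(√(t + 1/4))| ≤ C t^{−1/2} for all t ≥ 1. -/

import Mathlib

open Real MeasureTheory


lemma exist_k (s : ℝ) (hs : 0 ≤ s) :
    ∃ k : ℕ, 1 ≤ k ∧ (k : ℝ) ^ 2 - k ≤ s ∧ s < (k : ℝ) ^ 2 + k := by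
  set v := Real.sqrt (s + 1/4) with hv
  have hv0 : 0 ≤ v := Real.sqrt_nonneg _
  have hv2 : v ^ 2 = s + 1/4 := Real.sq_sqrt (by linarith)
  have hvh : (1:ℝ)/2 ≤ v := by nlinarith
  refine ⟨⌊v + 1/2⌋₊, ?_, ?_, ?_⟩
  · exact Nat.le_floor (by push_cast; linarith)
  · have h1 : (⌊v + 1/2⌋₊ : ℝ) ≤ v + 1/2 := Nat.floor_le (by linarith)
    nlinarith
  · have h2 : v + 1/2 < (⌊v + 1/2⌋₊ : ℝ) + 1 := Nat.lt_floor_add_one _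
    nlinarith

section
variable (N : ℝ → ℝ)
  (hN : ∀ k : ℕ, 1 ≤ k → ∀ s : ℝ,
      (k : ℝ) ^ 2 - k ≤ s → s < (k : ℝ) ^ 2 + k → N s = (k : ℝ) ^ 2)

include hN

lemma N_mono : MonotoneOn N (Set.Ici (0:ℝ)) := by
  intro a ha b hb hab
  obtain ⟨j, hj1, hj2, hj3⟩ := exist_k a ha
  obtain ⟨k, hk1, hk2, hk3⟩ := exist_k b hb
  rw [hN j hj1 a hj2 hj3, hN k hk1 b hk2 hk3]
  have hjk : j ≤ k := by
    by_contra h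
    push_neg at h
    have : (k:ℝ) + 1 ≤ j := by exact_mod_cast h
    nlinarith
  have : (j:ℝ) ≤ k := by exact_mod_cast hjk
  nlinarith

lemma N_integrable (a b : ℝ) (ha : 0 ≤ a) (hb : 0 ≤ b) :
    IntervalIntegrable N volume a b := by
  apply MonotoneOn.intervalIntegrable
  apply (N_mono N hN).mono
  intro x hx
  rw [Set.mem_uIcc] at hx
  rcases hx with h | h
  · exact le_trans ha h.1
  · exact le_trans hb h.1

lemma N_block (k : ℕ) :
    (∫ s in (0:ℝ)..((k:ℝ)^2 + k), N s) = (k:ℝ)^2 * ((k:ℝ)+1)^2 / 2 := by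
  induction k with
  | zero => simp
  | succ m ih =>
    have hcast : ((m+1:ℕ):ℝ) = (m:ℝ) + 1 := by push_cast; ring
    have hb : (0:ℝ) ≤ (m:ℝ)^2 + m := by positivity
    have hb' : ((m:ℝ)^2 + m) ≤ ((m:ℝ)+1)^2 + ((m:ℝ)+1) := by nlinarith
    have hsplit := intervalIntegral.integral_add_adjacent_intervals
      (a := (0:ℝ)) (b := (m:ℝ)^2 + m) (c := ((m:ℝ)+1)^2 + ((m:ℝ)+1)) (f := N) (μ := volume)
      (N_integrable N hN _ _ le_rfl hb) (N_integrable N hN _ _ hb (by positivity))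
    have hconst : (∫ s in ((m:ℝ)^2 + m)..(((m:ℝ)+1)^2 + ((m:ℝ)+1)), N s)
        = ∫ s in ((m:ℝ)^2 + m)..(((m:ℝ)+1)^2 + ((m:ℝ)+1)), (((m:ℝ)+1)^2 : ℝ) := by
      apply intervalIntegral.integral_congr_ae
      have hne : ∀ᵐ x : ℝ, x ≠ ((m:ℝ)+1)^2 + ((m:ℝ)+1) := by
        rw [MeasureTheory.ae_iff]; simp
      filter_upwards [hne] with x hx hmem
      rw [Set.uIoc_of_le hb'] at hmem
      have h1 : ((m+1:ℕ):ℝ)^2 - ((m+1:ℕ):ℝ) ≤ x := by push_cast; nlinarith [hmem.1]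
      have h2 : x < ((m+1:ℕ):ℝ)^2 + ((m+1:ℕ):ℝ) := by
        rcases lt_or_eq_of_le hmem.2 with h | h
        · push_cast; linarith
        · exact absurd h hx
      rw [hN (m+1) (by omega) x h1 h2]
      push_cast; ring
    rw [hcast, ← hsplit, ih, hconst, intervalIntegral.integral_const]
    have : (((m:ℝ)+1)^2 + ((m:ℝ)+1)) - ((m:ℝ)^2 + m) = 2*(m:ℝ) + 2 := by ring
    rw [this]
    simp only [smul_eq_mul]
    ring

lemma N_integral (k : ℕ) (hk : 1 ≤ k) (t : ℝ) (h1 : (k:ℝ)^2 - k ≤ t) (h2 : t < (k:ℝ)^2 + k) :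
    (∫ s in (0:ℝ)..t, N s) = ((k:ℝ)-1)^2 * (k:ℝ)^2 / 2 + (k:ℝ)^2 * (t - (k:ℝ)^2 + k) := by
  obtain ⟨m, rfl⟩ : ∃ m : ℕ, k = m + 1 := ⟨k - 1, by omega⟩
  have hcast : ((m+1:ℕ):ℝ) = (m:ℝ) + 1 := by push_cast; ring
  have hbm : ((m+1:ℕ):ℝ)^2 - ((m+1:ℕ):ℝ) = (m:ℝ)^2 + m := by push_cast; ring
  have hb : (0:ℝ) ≤ (m:ℝ)^2 + m := by positivity
  rw [hbm] at h1
  have ht0 : 0 ≤ t := le_trans hb h1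
  have hsplit := intervalIntegral.integral_add_adjacent_intervals
    (a := (0:ℝ)) (b := (m:ℝ)^2 + m) (c := t) (f := N) (μ := volume)
    (N_integrable N hN _ _ le_rfl hb) (N_integrable N hN _ _ hb ht0)
  have hconst : (∫ s in ((m:ℝ)^2 + m)..t, N s) = ∫ s in ((m:ℝ)^2 + m)..t, (((m:ℝ)+1)^2 : ℝ) := by
    apply intervalIntegral.integral_congr
    intro x hmem
    rw [Set.uIcc_of_le h1] at hmem
    have ha : ((m+1:ℕ):ℝ)^2 - ((m+1:ℕ):ℝ) ≤ x := by rw [hbm]; exact hmem.1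
    have hb2 : x < ((m+1:ℕ):ℝ)^2 + ((m+1:ℕ):ℝ) := lt_of_le_of_lt hmem.2 h2
    rw [hN (m+1) (by omega) x ha hb2]
    push_cast; ring
  rw [← hsplit, N_block N hN m, hconst, intervalIntegral.integral_const]
  simp only [smul_eq_mul, hcast]
  ring

end

set_option maxHeartbeats 1000000 in
/-- The function `g(x) = 1/6 − 2(x − ⌊x + 1/2⌋)²` is continuous, periodic of period 1
and has mean value zero, and the average error for the sphere satisfies
`A(t) = g(√(t + 1/4)) + O(t^{-1/2})`. -/
theorem sphere_average_error_asymptotics (g : ℝ → ℝ)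
    (hg : ∀ x : ℝ, g x = 1 / 6 - 2 * (x - (⌊x + 1 / 2⌋ : ℝ)) ^ 2)
    (N : ℝ → ℝ)
    (hN : ∀ k : ℕ, 1 ≤ k → ∀ s : ℝ,
      (k : ℝ) ^ 2 - k ≤ s → s < (k : ℝ) ^ 2 + k → N s = (k : ℝ) ^ 2) :
    Continuous g ∧ (∀ x : ℝ, g (x + 1) = g x) ∧ (∫ x in (0:ℝ)..1, g x) = 0 ∧
    ∃ C : ℝ, ∀ t : ℝ, 1 ≤ t →
      |((1 / t) * (∫ s in (0:ℝ)..t, (N s - s)) - 1 / 3) - g (Real.sqrt (t + 1 / 4))| ≤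
        C * t ^ (-(1/2) : ℝ) := by
  have hcont : Continuous g := by
    have hrepr : g = fun x : ℝ => 1 / 6 - 2 * ‖(x : AddCircle (1:ℝ))‖ ^ 2 := by
      funext x
      rw [hg, AddCircle.norm_eq, ← round_eq, ← sq_abs (x - round x)]
      simp
    rw [hrepr]
    have h1 : Continuous ((↑) : ℝ → AddCircle (1:ℝ)) := AddCircle.continuous_mk' 1
    exact continuous_const.sub (continuous_const.mul ((h1.norm).pow 2))
  have hper : ∀ x : ℝ, g (x + 1) = g x := by
    intro x
    rw [hg, hg]
    have : x + 1 + 1/2 = (x + 1/2) + (1:ℤ) := by push_cast; ring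
    rw [this, Int.floor_add_intCast]
    push_cast
    ring
  have hzero : (∫ x in (0:ℝ)..1, g x) = 0 := by
    have hsplit := intervalIntegral.integral_add_adjacent_intervals (a := (0:ℝ)) (b := 1/2) (c := 1)
      (f := g) (μ := volume) (hcont.intervalIntegrable _ _) (hcont.intervalIntegrable _ _)
    have hne : ∀ᵐ x : ℝ, x ≠ (1/2:ℝ) := by
      rw [MeasureTheory.ae_iff]
      simp
    have e1 : (∫ x in (0:ℝ)..(1/2), g x) = ∫ x in (0:ℝ)..(1/2), (1/6 - 2*x^2 : ℝ) := by
      apply intervalIntegral.integral_congr_ae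
      filter_upwards [hne] with x hx hmem
      rw [Set.uIoc_of_le (by norm_num)] at hmem
      have hfl : ⌊x + 1/2⌋ = 0 := by
        rw [Int.floor_eq_iff]
        constructor
        · push_cast; linarith [hmem.1]
        · push_cast
          rcases lt_or_eq_of_le hmem.2 with h | h
          · linarith
          · exact absurd h hx
      rw [hg, hfl]
      push_cast; ring
    have e2 : (∫ x in (1/2:ℝ)..1, g x) = ∫ x in (1/2:ℝ)..1, (1/6 - 2*(x-1)^2 : ℝ) := by
      apply intervalIntegral.integral_congr
      intro x hmem
      rw [Set.uIcc_of_le (by norm_num)] at hmem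
      have hfl : ⌊x + 1/2⌋ = 1 := by
        rw [Int.floor_eq_iff]
        constructor
        · push_cast; linarith [hmem.1]
        · push_cast; linarith [hmem.2]
      rw [hg, hfl]
      push_cast; ring
    have v1 : (∫ x in (0:ℝ)..(1/2:ℝ), (1/6 - 2*x^2 : ℝ)) = 0 := by
      have h2 : IntervalIntegrable (fun x : ℝ => 2*x^2) volume 0 (1/2) :=
        (continuous_const.mul (continuous_pow 2)).intervalIntegrable _ _
      rw [intervalIntegral.integral_sub (intervalIntegrable_const) h2, intervalIntegral.integral_const,
        intervalIntegral.integral_const_mul, integral_pow]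
      norm_num
    have v2 : (∫ x in (1/2:ℝ)..1, (1/6 - 2*(x-1)^2 : ℝ)) = 0 := by
      have h2 : IntervalIntegrable (fun x : ℝ => 2*(x-1)^2) volume (1/2) 1 :=
        (continuous_const.mul ((continuous_id.sub continuous_const).pow 2)).intervalIntegrable _ _
      rw [intervalIntegral.integral_sub (intervalIntegrable_const) h2, intervalIntegral.integral_const,
        intervalIntegral.integral_const_mul]
      have := intervalIntegral.integral_comp_sub_right (a := (1/2:ℝ)) (b := 1) (fun x : ℝ => x^2) 1
      rw [this, integral_pow]
      norm_num
    rw [← hsplit, e1, e2, v1, v2]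
    norm_num
  refine ⟨hcont, hper, hzero, ?_⟩
  have hNint := N_integral N hN
  have hNii := N_integrable N hN
  have hex := exist_k
  refine ⟨16, fun t ht => ?_⟩
  have ht0 : (0:ℝ) < t := by linarith
  obtain ⟨k, hk1, hk2, hk3⟩ := hex t (by linarith)
  set K : ℝ := (k : ℝ) with hK
  have hK1 : (1:ℝ) ≤ K := by rw [hK]; exact_mod_cast hk1
  -- the integral
  have hint : (∫ s in (0:ℝ)..t, (N s - s)) = (K^2 - (t - K^2)^2) / 2 := by
    rw [intervalIntegral.integral_sub (f := N) (g := fun s => s) (hNii 0 t le_rfl (by linarith))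
      (continuous_id.intervalIntegrable _ _), hNint k hk1 t hk2 hk3, integral_id]
    ring
  -- sqrt facts
  set u := Real.sqrt (t + 1/4) with hu
  have hu0 : 0 ≤ u := Real.sqrt_nonneg _
  have hu2 : u ^ 2 = t + 1/4 := Real.sq_sqrt (by linarith)
  have hul : K - 1/2 ≤ u := by nlinarith [sq_nonneg (u - (K - 1/2)), sq_nonneg (u + (K - 1/2))]
  have huu : u < K + 1/2 := by nlinarith [sq_nonneg (u + (K + 1/2))]
  -- floor of u + 1/2
  have hfl : (⌊u + 1/2⌋ : ℝ) = K := by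
    have : ⌊u + 1/2⌋ = (k : ℤ) := by
      rw [Int.floor_eq_iff]
      constructor
      · push_cast; linarith
      · push_cast; linarith
    rw [this]; push_cast; rfl
  have hgu : g u = 1/6 - 2 * (u - K)^2 := by rw [hg, hfl]
  -- sqrt t facts
  set q := Real.sqrt t with hq
  have hq2 : q ^ 2 = t := Real.sq_sqrt (by linarith)
  have hq1 : 1 ≤ q := by nlinarith [Real.sqrt_nonneg t]
  have hKq : K ≤ 2 * q := by nlinarith
  -- the key algebraic identity
  set D : ℝ := t + K^2 + 2*K*u with hD
  have hDt : t ≤ D := by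
    have h9 : 0 ≤ K^2 + 2*K*u := by positivity
    rw [hD]; linarith
  have hDpos : 0 < D := by linarith
  have key : (t + K^2 - 2*K*u) * D = (t - K^2)^2 - K^2 := by
    rw [hD]; linear_combination (-4*K^2) * hu2
  have hEeq : ((1 / t) * (∫ s in (0:ℝ)..t, (N s - s)) - 1 / 3) - g u
      = (K^2 - (t - K^2)^2) * (D - 4*t) / (2*t*D) := by
    rw [hint, hgu]
    have h2u : 2 * (u - K)^2 = 2*t + 1/2 - 4*K*u + 2*K^2 := by linear_combination 2 * hu2
    rw [h2u]
    field_simp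
    linear_combination (-2*t) * key + (-296*K^2*t) * hu2
  rw [hEeq]
  -- bounds
  have hxb : (t - K^2)^2 ≤ K^2 := by
    nlinarith [mul_nonneg (by linarith : (0:ℝ) ≤ K - (t - K^2)) (by linarith : (0:ℝ) ≤ K + (t - K^2))]
  have hnum1 : |K^2 - (t - K^2)^2| ≤ K^2 := by
    rw [abs_of_nonneg (by linarith)]; nlinarith [sq_nonneg (t - K^2)]
  have hnum2 : |D - 4*t| ≤ 4*K := by
    have p1 : 2*K*(K - 1/2) ≤ 2*K*u := by
      apply mul_le_mul_of_nonneg_left hul; linarith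
    have p2 : 2*K*u ≤ 2*K*(K + 1/2) := by
      apply mul_le_mul_of_nonneg_left (le_of_lt huu); linarith
    rw [abs_le]; constructor <;> nlinarith
  have hCrw : (16:ℝ) * t ^ (-(1/2) : ℝ) = 16 / q := by
    rw [Real.rpow_neg (by linarith), ← Real.sqrt_eq_rpow]
    ring
  rw [hCrw, abs_div, abs_of_pos (by positivity : (0:ℝ) < 2*t*D), abs_mul,
    div_le_div_iff₀ (by positivity) (by positivity)]
  have h1 : |K ^ 2 - (t - K ^ 2) ^ 2| * |D - 4 * t| ≤ 4 * K^3 := by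
    calc |K ^ 2 - (t - K ^ 2) ^ 2| * |D - 4 * t| ≤ K^2 * (4*K) :=
          mul_le_mul hnum1 hnum2 (abs_nonneg _) (by positivity)
      _ = 4 * K^3 := by ring
  have hq0 : 0 < q := by linarith
  nlinarith [mul_le_mul h1 (le_refl q) (le_of_lt hq0) (by positivity : (0:ℝ) ≤ 4*K^3),
    mul_pos ht0 hDpos, sq_nonneg q, mul_le_mul hKq (le_refl K) (by linarith) (by positivity : (0:ℝ) ≤ 2*q)]
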